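/- Let F ∈ ℂ[X] be a polynomial of degree n ≥ 1, let m ∈ ℂ, r > 0, let K ∈ ℝ with K ≥ 1, and let k be an integer with 0 ≤ k ≤ n. If T_k(m, r, K, F) holds, then the open disk D(m, r) contains exactly k roots of F counted with multiplicity. -/

import Mathlib

open Polynomial Finset

/-- The Pellet test `T_k(m, r, K, F)`:
`|F^{(k)}(m)|·r^k/k! > K·∑_{0 ≤ i ≤ deg F, i ≠ k} |F^{(i)}(m)|·r^i/i!`. -/
def TkTest (F : Polynomial ℂ) (m : ℂ) (r K : ℝ) (k : ℕ) : Prop :=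
  K * ∑ i ∈ (Finset.range (F.natDegree + 1)).erase k,
      ‖(Polynomial.derivative^[i] F).eval m‖ * r ^ i / (Nat.factorial i) <
    ‖(Polynomial.derivative^[k] F).eval m‖ * r ^ k / (Nat.factorial k)

open Classical in
/-- The number of roots of `F` (counted with multiplicity) in the open disk `D(m, r)`. -/
noncomputable def rootsInDisk (F : Polynomial ℂ) (m : ℂ) (r : ℝ) : ℕ :=
  Multiset.card (F.roots.filter fun z => ‖z - m‖ < r)

open Metric Complex

private lemma circleIntegral_sub_inv_of_not_mem {c w : ℂ} {R : ℝ} (hR : 0 ≤ R)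
    (hw : w ∉ closedBall c R) : (∮ z in C(c, R), (z - w)⁻¹) = 0 := by
  refine Complex.circleIntegral_eq_zero_of_differentiable_on_off_countable hR
    Set.countable_empty ?_ ?_
  · intro z hz
    have hzw : z ≠ w := fun h => hw (h ▸ hz)
    have : DifferentiableAt ℂ (fun z : ℂ => (z - w)⁻¹) z :=
      (differentiableAt_fun_id.sub (differentiableAt_const w)).inv (sub_ne_zero.2 hzw)
    exact this.continuousAt.continuousWithinAt
  · intro z hz
    have hzw : z ≠ w := fun h => hw (h ▸ ball_subset_closedBall hz.1)
    exact (differentiableAt_fun_id.sub (differentiableAt_const w)).inv (sub_ne_zero.2 hzw)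

private lemma my_circleIntegral_add {f g : ℂ → ℂ} {c : ℂ} {R : ℝ}
    (hf : CircleIntegrable f c R) (hg : CircleIntegrable g c R) :
    (∮ z in C(c, R), (f z + g z)) = (∮ z in C(c, R), f z) + ∮ z in C(c, R), g z := by
  simp only [circleIntegral, smul_add]
  exact intervalIntegral.integral_add hf.out hg.out

private lemma argument_principle (m : ℂ) (r : ℝ) (hr : 0 < r) :
    ∀ N : ℕ, ∀ F : Polynomial ℂ, F ≠ 0 → Multiset.card F.roots = N →
    (∀ z ∈ sphere m r, F.eval z ≠ 0) →
    (∮ z in C(m, r), F.derivative.eval z / F.eval z)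
      = 2 * Real.pi * Complex.I * (rootsInDisk F m r) := by
  intro N
  induction N with
  | zero =>
    intro F hF hcard _
    have hroots : F.roots = 0 := Multiset.card_eq_zero.mp hcard
    have hdeg : F.natDegree = 0 := by
      by_contra h
      obtain ⟨a, ha⟩ := Complex.exists_root (f := F) (by
        rwa [Polynomial.degree_eq_natDegree hF, ← Nat.cast_zero, Nat.cast_lt, Nat.pos_iff_ne_zero])
      have : a ∈ F.roots := (Polynomial.mem_roots hF).2 ha
      simp [hroots] at this
    obtain ⟨a, rfl⟩ := Polynomial.natDegree_eq_zero.mp hdeg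
    simp [rootsInDisk, hroots, circleIntegral]
  | succ N ih =>
    intro F hF hcard hsph
    have hpos : 0 < Multiset.card F.roots := by omega
    obtain ⟨a, ha⟩ := Multiset.card_pos_iff_exists_mem.mp hpos
    have hroot : F.IsRoot a := (Polynomial.mem_roots hF).1 ha
    set G := F /ₘ (X - C a) with hGdef
    have hFG : (X - C a) * G = F := Polynomial.mul_divByMonic_eq_iff_isRoot.2 hroot
    have hG : G ≠ 0 := by rintro h; rw [h, mul_zero] at hFG; exact hF hFG.symm
    have hrootsF : F.roots = a ::ₘ G.roots := by
      rw [← hFG, Polynomial.roots_mul (hFG.symm ▸ hF), Polynomial.roots_X_sub_C]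
      rfl
    have hcardG : Multiset.card G.roots = N := by
      rw [hrootsF] at hcard; simpa using hcard
    have hGsph : ∀ z ∈ sphere m r, G.eval z ≠ 0 := by
      intro z hz h
      exact hsph z hz (by rw [← hFG]; simp [h])
    have hzna : ∀ z ∈ sphere m r, z ≠ a := by
      intro z hz h
      exact hsph z hz (h ▸ hroot)
    have hEq : Set.EqOn (fun z => F.derivative.eval z / F.eval z)
        (fun z => (z - a)⁻¹ + G.derivative.eval z / G.eval z) (sphere m r) := by
      intro z hz
      have h1 : z - a ≠ 0 := sub_ne_zero.2 (hzna z hz)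
      have h2 : G.eval z ≠ 0 := hGsph z hz
      have hd : F.derivative = G + (X - C a) * G.derivative := by
        rw [← hFG, Polynomial.derivative_mul]; simp [Polynomial.derivative_X_sub_C]
      rw [hd]; simp only [← hFG]
      simp only [Polynomial.eval_add, Polynomial.eval_mul, Polynomial.eval_sub,
        Polynomial.eval_X, Polynomial.eval_C]
      field_simp
    have hint1 : CircleIntegrable (fun z => (z - a)⁻¹) m r := by
      apply ContinuousOn.circleIntegrable hr.le
      exact ContinuousOn.inv₀ (by fun_prop) (fun z hz => sub_ne_zero.2 (hzna z hz))
    have hint2 : CircleIntegrable (fun z => G.derivative.eval z / G.eval z) m r := by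
      apply ContinuousOn.circleIntegrable hr.le
      exact ContinuousOn.div (Polynomial.continuous _).continuousOn
        (Polynomial.continuous _).continuousOn hGsph
    have hana : ‖a - m‖ ≠ r := by
      intro h
      have : a ∈ sphere m r := by simpa [mem_sphere_iff_norm] using h
      exact hsph a this hroot
    have hIa : (∮ z in C(m, r), (z - a)⁻¹)
        = if ‖a - m‖ < r then 2 * Real.pi * Complex.I else 0 := by
      split_ifs with h
      · exact circleIntegral.integral_sub_inv_of_mem_ball (mem_ball_iff_norm.2 h)
      · refine circleIntegral_sub_inv_of_not_mem hr.le ?_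
        simp only [mem_closedBall, Complex.dist_eq, not_le]
        exact lt_of_le_of_ne (not_lt.mp h) (Ne.symm hana)
    have hcount : (rootsInDisk F m r : ℂ)
        = (if ‖a - m‖ < r then 1 else 0) + (rootsInDisk G m r : ℂ) := by
      classical
      simp only [rootsInDisk, hrootsF, Multiset.filter_cons]
      split_ifs with h <;> simp [add_comm]
    calc (∮ z in C(m, r), F.derivative.eval z / F.eval z)
        = ∮ z in C(m, r), ((z - a)⁻¹ + G.derivative.eval z / G.eval z) :=
          circleIntegral.integral_congr hr.le hEq
      _ = (∮ z in C(m, r), (z - a)⁻¹) + ∮ z in C(m, r), G.derivative.eval z / G.eval z :=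
          my_circleIntegral_add hint1 hint2
      _ = _ := by
          rw [hIa, ih G hG hcardG hGsph, hcount]
          split_ifs <;> ring

/-- **Pellet's theorem**: if `T_k(m, r, K, F)` holds for some `K ≥ 1` and `0 ≤ k ≤ n = deg F`,
then the open disk `D(m, r)` contains exactly `k` roots of `F` counted with multiplicity. -/
theorem pellet_theorem (F : Polynomial ℂ) (n : ℕ) (hn : 1 ≤ n) (hdeg : F.natDegree = n)
    (m : ℂ) (r : ℝ) (hr : 0 < r) (K : ℝ) (hK : 1 ≤ K) (k : ℕ) (hk : k ≤ n)
    (hT : TkTest F m r K k) :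
    rootsInDisk F m r = k := by
  classical
  set c : ℕ → ℂ := fun i => (Polynomial.hasseDeriv i F).eval m with hc_def
  have hderiv : ∀ i : ℕ, ((Polynomial.derivative)^[i] F).eval m = (i.factorial : ℂ) * c i := by
    intro i
    rw [← Polynomial.factorial_smul_hasseDeriv (R := ℂ) (k := i)]
    simp [hc_def, nsmul_eq_mul]
  have hc : ∀ i : ℕ, ‖((Polynomial.derivative)^[i] F).eval m‖ * r ^ i
      / (i.factorial : ℝ) = ‖c i‖ * r ^ i := by
    intro i
    rw [hderiv, norm_mul]
    have h1 : ‖(i.factorial : ℂ)‖ = (i.factorial : ℝ) := by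
      simpa using Complex.norm_natCast i.factorial
    rw [h1]
    have h2 : (0:ℝ) < (i.factorial : ℝ) := by positivity
    field_simp
  -- Taylor expansion
  have hF_eq : ∑ i ∈ range (n+1), C (c i) * (X - C m) ^ i = F := by
    have h1 := Polynomial.sum_taylor_eq F m
    rw [Polynomial.sum_over_range' _ (by intros; simp) (n+1)
      (by rw [Polynomial.natDegree_taylor, hdeg]; omega)] at h1
    simpa only [Polynomial.taylor_coeff] using h1
  set Q : Polynomial ℂ := ∑ i ∈ (range (n+1)).erase k, C (c i) * (X - C m) ^ i with hQ_def
  set P : Polynomial ℂ := C (c k) * (X - C m) ^ k with hP_def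
  have hPQ : P + Q = F := by
    rw [← hF_eq, hQ_def, hP_def]
    exact Finset.add_sum_erase (range (n+1)) (fun i => C (c i) * (X - C m) ^ i)
      (mem_range.2 (by omega))
  set S : ℝ := ∑ i ∈ (range (n+1)).erase k, ‖c i‖ * r ^ i with hS_def
  have hS0 : 0 ≤ S := Finset.sum_nonneg fun i _ => by positivity
  have hSlt : S < ‖c k‖ * r ^ k := by
    have h1 : K * S < ‖c k‖ * r ^ k := by
      rw [TkTest, hdeg] at hT
      rw [← hc k]
      calc K * S = K * ∑ i ∈ (range (n+1)).erase k,
            ‖((Polynomial.derivative)^[i] F).eval m‖ * r ^ i / (i.factorial : ℝ) := by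
            rw [hS_def]; congr 1; exact (Finset.sum_congr rfl fun i _ => (hc i).symm)
        _ < _ := hT
    nlinarith
  have hck : c k ≠ 0 := by
    intro h
    rw [h] at hSlt
    simp at hSlt
    linarith
  set Ft : ℝ → Polynomial ℂ := fun t => P + C (t : ℂ) * Q with hFt_def
  have hFt_eval : ∀ (t : ℝ) (z : ℂ),
      (Ft t).eval z = c k * (z - m) ^ k + (t : ℂ) * Q.eval z := by
    intro t z; simp [hFt_def, hP_def]
  have hQbound : ∀ z ∈ sphere m r, ‖Q.eval z‖ ≤ S := by
    intro z hz
    have hzm : ‖z - m‖ = r := by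
      rw [mem_sphere_iff_norm] at hz; simpa using hz
    rw [hQ_def]
    simp only [Polynomial.eval_finset_sum, Polynomial.eval_mul, Polynomial.eval_pow,
      Polynomial.eval_sub, Polynomial.eval_X, Polynomial.eval_C]
    refine le_trans (norm_sum_le _ _) (le_of_eq ?_)
    rw [hS_def]
    refine Finset.sum_congr rfl fun i _ => ?_
    rw [norm_mul, norm_pow, hzm]
  have hsphne : ∀ t ∈ Set.Icc (0:ℝ) 1, ∀ z ∈ sphere m r, (Ft t).eval z ≠ 0 := by
    intro t ht z hz h0
    have hzm : ‖z - m‖ = r := by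
      rw [mem_sphere_iff_norm] at hz; simpa using hz
    have h1 : ‖c k * (z - m) ^ k‖ = ‖c k‖ * r ^ k := by
      rw [norm_mul, norm_pow, hzm]
    have h2 : ‖(t : ℂ) * Q.eval z‖ ≤ S := by
      rw [norm_mul]
      have ht1 : ‖(t : ℂ)‖ ≤ 1 := by
        rw [Complex.norm_of_nonneg ht.1]; exact ht.2
      calc ‖(t:ℂ)‖ * ‖Q.eval z‖ ≤ 1 * S :=
            mul_le_mul ht1 (hQbound z hz) (by positivity) zero_le_one
        _ = S := one_mul S
    have heq : c k * (z - m) ^ k = -((t : ℂ) * Q.eval z) := by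
      have := hFt_eval t z
      rw [h0] at this
      linear_combination -this
    have := congrArg (‖·‖) heq
    rw [h1, norm_neg] at this
    linarith [h2, hSlt]
  have hFtne : ∀ t ∈ Set.Icc (0:ℝ) 1, Ft t ≠ 0 := by
    intro t ht h
    have hm : (m + r : ℂ) ∈ sphere m r := by
      simp [Complex.dist_eq, abs_of_pos hr]
    exact hsphne t ht _ hm (by rw [h]; simp)
  set Nt : ℝ → ℕ := fun t => rootsInDisk (Ft t) m r with hNt_def
  have hAP : ∀ t ∈ Set.Icc (0:ℝ) 1,
      (∮ z in C(m, r), (Ft t).derivative.eval z / (Ft t).eval z)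
        = 2 * Real.pi * Complex.I * (Nt t) :=
    fun t ht => argument_principle m r hr _ (Ft t) (hFtne t ht) rfl (hsphne t ht)
  set φ : ℝ → ℝ := fun t =>
    ((∮ z in C(m, r), (Ft t).derivative.eval z / (Ft t).eval z)
      * (2 * Real.pi * Complex.I)⁻¹).re with hφ_def
  have h2pi : (2 * (Real.pi:ℂ) * Complex.I) ≠ 0 := by
    simp [Real.pi_ne_zero, Complex.I_ne_zero]
  have hφval : ∀ t ∈ Set.Icc (0:ℝ) 1, φ t = Nt t := by
    intro t ht
    rw [hφ_def]
    simp only [hAP t ht]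
    rw [mul_comm, ← mul_assoc, inv_mul_cancel₀ h2pi, one_mul, Complex.natCast_re]
  have hφcont : ContinuousOn φ (Set.Icc (0:ℝ) 1) := by
    rw [continuousOn_iff_continuous_restrict]
    have key : Continuous fun t : (Set.Icc (0:ℝ) 1) =>
        ∮ z in C(m, r), ((Ft ↑t).derivative.eval z / (Ft ↑t).eval z) := by
      have heq : (fun t : (Set.Icc (0:ℝ) 1) =>
          ∮ z in C(m, r), ((Ft ↑t).derivative.eval z / (Ft ↑t).eval z))
          = fun t : (Set.Icc (0:ℝ) 1) => ∫ θ in (0:ℝ)..(2*Real.pi),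
            (fun (s : (Set.Icc (0:ℝ) 1)) (θ : ℝ) => (circleMap 0 r θ * Complex.I) *
              ((P.derivative.eval (circleMap m r θ)
                  + ((s:ℝ):ℂ) * Q.derivative.eval (circleMap m r θ)) /
               (P.eval (circleMap m r θ) + ((s:ℝ):ℂ) * Q.eval (circleMap m r θ)))) t θ := by
        funext t
        rw [circleIntegral]
        congr 1
        funext θ
        simp [hFt_def, deriv_circleMap, smul_eq_mul, Polynomial.derivative_add,
          Polynomial.derivative_C_mul]
      rw [heq]
      apply intervalIntegral.continuous_parametric_intervalIntegral_of_continuous' (μ := MeasureTheory.volume)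
      have hw : Continuous fun p : (Set.Icc (0:ℝ) 1) × ℝ => circleMap m r p.2 :=
        (continuous_circleMap m r).comp continuous_snd
      have hts : Continuous fun p : (Set.Icc (0:ℝ) 1) × ℝ => (((p.1 : ℝ)) : ℂ) :=
        Complex.continuous_ofReal.comp (continuous_subtype_val.comp continuous_fst)
      have hden : ∀ p : (Set.Icc (0:ℝ) 1) × ℝ,
          P.eval (circleMap m r p.2) + ((p.1:ℝ):ℂ) * Q.eval (circleMap m r p.2) ≠ 0 := by
        intro p
        have := hsphne (p.1 : ℝ) p.1.2 (circleMap m r p.2) (circleMap_mem_sphere m hr.le p.2)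
        simpa [hFt_def] using this
      apply Continuous.mul
      · exact ((continuous_circleMap 0 r).comp continuous_snd).mul continuous_const
      · exact Continuous.div
          (((Polynomial.continuous _).comp hw).add
            (hts.mul ((Polynomial.continuous _).comp hw)))
          (((Polynomial.continuous _).comp hw).add
            (hts.mul ((Polynomial.continuous _).comp hw)))
          hden
    exact (Complex.continuous_re.comp (key.mul continuous_const))
  have h01 : Nt 0 = Nt 1 := by
    by_contra hne
    have h0m : (0:ℝ) ∈ Set.Icc (0:ℝ) 1 := by constructor <;> norm_num
    have h1m : (1:ℝ) ∈ Set.Icc (0:ℝ) 1 := by constructor <;> norm_num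
    set a : ℕ := min (Nt 0) (Nt 1) with ha_def
    have hkey : ((a:ℝ) + 1/2) ∈ Set.uIcc (φ 0) (φ 1) := by
      rw [hφval 0 h0m, hφval 1 h1m, Set.mem_uIcc]
      rcases Nat.lt_or_ge (Nt 0) (Nt 1) with h | h
      · left
        constructor
        · have : a = Nt 0 := by omega
          rw [this]; push_cast; linarith
        · have : a + 1 ≤ Nt 1 := by omega
          have := (Nat.cast_le (α := ℝ)).2 this
          push_cast at this ⊢; linarith
      · right
        have hlt : Nt 1 < Nt 0 := by omega
        constructor
        · have : a = Nt 1 := by omega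
          rw [this]; push_cast; linarith
        · have : a + 1 ≤ Nt 0 := by omega
          have := (Nat.cast_le (α := ℝ)).2 this
          push_cast at this ⊢; linarith
    have hcont' : ContinuousOn φ (Set.uIcc (0:ℝ) 1) := by
      rwa [Set.uIcc_of_le (zero_le_one)]
    obtain ⟨t, htmem, htval⟩ := intermediate_value_uIcc hcont' hkey
    rw [Set.uIcc_of_le (zero_le_one)] at htmem
    rw [hφval t htmem] at htval
    rcases Nat.lt_or_ge (Nt t) (a + 1) with h | h
    · have : (Nt t : ℝ) ≤ a := by exact_mod_cast Nat.lt_succ_iff.1 h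
      linarith
    · have : (a:ℝ) + 1 ≤ (Nt t : ℝ) := by exact_mod_cast h
      linarith
  have hNt1 : Nt 1 = rootsInDisk F m r := by
    have hFt1 : Ft 1 = F := by
      rw [hFt_def]; simp only [Complex.ofReal_one, map_one, one_mul]; exact hPQ
    rw [hNt_def]
    show rootsInDisk (Ft 1) m r = _
    rw [hFt1]
  have hNt0 : Nt 0 = k := by
    have hFt0 : Ft 0 = P := by simp [hFt_def]
    rw [hNt_def]
    simp only [hFt0]
    rw [rootsInDisk]
    rw [hP_def, Polynomial.roots_C_mul _ hck, Polynomial.roots_pow, Polynomial.roots_X_sub_C]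
    rw [Multiset.nsmul_singleton]
    have hfil : (Multiset.replicate k m).filter (fun z => ‖z - m‖ < r)
        = Multiset.replicate k m :=
      Multiset.filter_eq_self.2 fun z hz => by
        rw [Multiset.eq_of_mem_replicate hz]; simpa [sub_self] using hr
    rw [hfil, Multiset.card_replicate]
  omega
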